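/- For the three-parameter fundamental diagram Q with α, λ > 0 and p ∈ (0,1), the derivative Q'(ρ) has exactly one zero ρ_c in (0, ρ_m), since Q'(0) > 0, Q'(ρ_m) < 0, and Q' is strictly decreasing. -/

import Mathlib

open Real Set

lemma aux_mono_3pfd (lam : ℝ) {s t : ℝ} (hst : s < t) :
    s / Real.sqrt (1 + lam ^ 2 * s ^ 2) < t / Real.sqrt (1 + lam ^ 2 * t ^ 2) := by
  have hA0 : 0 < Real.sqrt (1 + lam ^ 2 * s ^ 2) := Real.sqrt_pos.mpr (by positivity)
  have hB0 : 0 < Real.sqrt (1 + lam ^ 2 * t ^ 2) := Real.sqrt_pos.mpr (by positivity)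
  have hA2 : Real.sqrt (1 + lam ^ 2 * s ^ 2) ^ 2 = 1 + lam ^ 2 * s ^ 2 :=
    Real.sq_sqrt (by positivity)
  have hB2 : Real.sqrt (1 + lam ^ 2 * t ^ 2) ^ 2 = 1 + lam ^ 2 * t ^ 2 :=
    Real.sq_sqrt (by positivity)
  set A := Real.sqrt (1 + lam ^ 2 * s ^ 2)
  set B := Real.sqrt (1 + lam ^ 2 * t ^ 2)
  rw [div_lt_div_iff₀ hA0 hB0]
  rcases le_or_gt 0 s with hs | hs
  · have ht : 0 < t := lt_of_le_of_lt hs hst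
    have h1 : (s * B) ^ 2 < (t * A) ^ 2 := by nlinarith [sq_nonneg lam, sq_nonneg (s*t)]
    nlinarith [mul_nonneg hs hB0.le, mul_pos ht hA0]
  · rcases le_or_gt t 0 with ht | ht
    · have h1 : (t * A) ^ 2 < (s * B) ^ 2 := by nlinarith [sq_nonneg lam, sq_nonneg (s*t)]
      have h2 : s * B < 0 := mul_neg_of_neg_of_pos hs hB0
      have h3 : t * A ≤ 0 := mul_nonpos_of_nonpos_of_nonneg ht hA0.le
      nlinarith
    · calc s * B < 0 := mul_neg_of_neg_of_pos hs hB0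
        _ < t * A := mul_pos ht hA0

lemma aux_deriv_3pfd (a b α lam p ρm : ℝ) (hρm : 0 < ρm) (x : ℝ) :
    HasDerivAt (fun ρ : ℝ => α * (a + (b - a) * ρ / ρm
        - Real.sqrt (1 + lam ^ 2 * (ρ / ρm - p) ^ 2)))
      (α * ((b - a) / ρm
        - lam ^ 2 * (x / ρm - p) / (ρm * Real.sqrt (1 + lam ^ 2 * (x / ρm - p) ^ 2)))) x := by
  have hpos : (0:ℝ) < 1 + lam ^ 2 * (x / ρm - p) ^ 2 := by positivity
  have hS : 0 < Real.sqrt (1 + lam ^ 2 * (x / ρm - p) ^ 2) := Real.sqrt_pos.mpr hpos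
  have h1 : HasDerivAt (fun ρ : ℝ => ρ / ρm - p) (1 / ρm) x := by
    simpa using ((hasDerivAt_id x).div_const ρm).sub_const p
  have h2 : HasDerivAt (fun ρ : ℝ => 1 + lam ^ 2 * (ρ / ρm - p) ^ 2)
      (lam ^ 2 * ((2 : ℕ) * (x / ρm - p) ^ 1 * (1 / ρm))) x :=
    ((h1.pow 2).const_mul (lam ^ 2)).const_add 1
  have h3 := h2.sqrt (ne_of_gt hpos)
  have h4 : HasDerivAt (fun ρ : ℝ => a + (b - a) * ρ / ρm) ((b - a) * 1 / ρm) x :=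
    (((hasDerivAt_id x).const_mul (b - a)).div_const ρm).const_add a
  have h5 := (h4.sub h3).const_mul α
  refine h5.congr_deriv ?_
  field_simp
  ring

/-- For the three-parameter fundamental diagram Q, the derivative Q' is strictly
    decreasing, positive at 0 and negative at ρ_m, hence has exactly one zero
    ρ_c in (0, ρ_m). -/
theorem three_param_FD_unique_critical_density
    (a b α lam p ρm : ℝ) (hα : 0 < α) (hlam : 0 < lam)
    (hp1 : 0 < p) (hp2 : p < 1) (hρm : 0 < ρm)
    (ha : a = Real.sqrt (1 + (lam * p) ^ 2))
    (hb : b = Real.sqrt (1 + (lam * (1 - p)) ^ 2)) :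
    (0 < deriv (fun ρ : ℝ => α * (a + (b - a) * ρ / ρm
        - Real.sqrt (1 + lam ^ 2 * (ρ / ρm - p) ^ 2))) 0) ∧
    (deriv (fun ρ : ℝ => α * (a + (b - a) * ρ / ρm
        - Real.sqrt (1 + lam ^ 2 * (ρ / ρm - p) ^ 2))) ρm < 0) ∧
    StrictAntiOn (deriv (fun ρ : ℝ => α * (a + (b - a) * ρ / ρm
        - Real.sqrt (1 + lam ^ 2 * (ρ / ρm - p) ^ 2)))) (Set.Icc 0 ρm) ∧
    (∃! ρc : ℝ, ρc ∈ Set.Ioo 0 ρm ∧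
      deriv (fun ρ : ℝ => α * (a + (b - a) * ρ / ρm
        - Real.sqrt (1 + lam ^ 2 * (ρ / ρm - p) ^ 2))) ρc = 0) := by
  set g : ℝ → ℝ := fun x => α * ((b - a) / ρm
      - lam ^ 2 * (x / ρm - p) / (ρm * Real.sqrt (1 + lam ^ 2 * (x / ρm - p) ^ 2))) with hg
  have hderiv : deriv (fun ρ : ℝ => α * (a + (b - a) * ρ / ρm
      - Real.sqrt (1 + lam ^ 2 * (ρ / ρm - p) ^ 2))) = g :=
    funext fun x => (aux_deriv_3pfd a b α lam p ρm hρm x).deriv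
  rw [hderiv]
  -- basic facts about a, b
  have ha0 : 0 < a := ha ▸ Real.sqrt_pos.mpr (by positivity)
  have hb0 : 0 < b := hb ▸ Real.sqrt_pos.mpr (by positivity)
  have ha2 : a ^ 2 = 1 + (lam * p) ^ 2 := by rw [ha]; exact Real.sq_sqrt (by positivity)
  have hb2 : b ^ 2 = 1 + (lam * (1 - p)) ^ 2 := by rw [hb]; exact Real.sq_sqrt (by positivity)
  have hab : 1 - lam ^ 2 * p * (1 - p) < a * b := by
    nlinarith [mul_pos ha0 hb0, sq_nonneg (a * b - (1 - lam ^ 2 * p * (1 - p))),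
      mul_pos hlam hlam, sq_nonneg (a - b)]
  -- value at 0
  have hsqrt0 : Real.sqrt (1 + lam ^ 2 * ((0:ℝ) / ρm - p) ^ 2) = a := by
    rw [ha]; congr 1; ring
  have hg0 : g 0 = α * (((b - a) * a + lam ^ 2 * p) / (ρm * a)) := by
    rw [hg]; simp only []; rw [hsqrt0]
    field_simp
    ring
  have hnum0 : 0 < (b - a) * a + lam ^ 2 * p := by nlinarith [hab, ha2]
  have hpos0 : 0 < g 0 := by
    rw [hg0]; exact mul_pos hα (div_pos hnum0 (mul_pos hρm ha0))
  -- value at ρm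
  have hsqrtm : Real.sqrt (1 + lam ^ 2 * (ρm / ρm - p) ^ 2) = b := by
    rw [hb]; congr 1; rw [div_self (ne_of_gt hρm)]; ring
  have hgm : g ρm = α * (((b - a) * b - lam ^ 2 * (1 - p)) / (ρm * b)) := by
    rw [hg]; simp only []; rw [hsqrtm]
    field_simp
  have hnumm : (b - a) * b - lam ^ 2 * (1 - p) < 0 := by nlinarith [hab, hb2]
  have hnegm : g ρm < 0 := by
    rw [hgm]
    exact mul_neg_of_pos_of_neg hα (div_neg_of_neg_of_pos hnumm (mul_pos hρm hb0))
  -- strict antitonicity (globally)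
  have hanti : StrictAnti g := by
    intro x y hxy
    have hst : x / ρm - p < y / ρm - p := by
      have h : x / ρm < y / ρm := div_lt_div_of_pos_right hxy hρm
      linarith
    have hkey := aux_mono_3pfd lam hst
    have hAx : 0 < Real.sqrt (1 + lam ^ 2 * (x / ρm - p) ^ 2) :=
      Real.sqrt_pos.mpr (by positivity)
    have hAy : 0 < Real.sqrt (1 + lam ^ 2 * (y / ρm - p) ^ 2) :=
      Real.sqrt_pos.mpr (by positivity)
    have h2 : lam ^ 2 * (x / ρm - p) / (ρm * Real.sqrt (1 + lam ^ 2 * (x / ρm - p) ^ 2))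
        < lam ^ 2 * (y / ρm - p) / (ρm * Real.sqrt (1 + lam ^ 2 * (y / ρm - p) ^ 2)) := by
      have e1 : lam ^ 2 * (x / ρm - p) / (ρm * Real.sqrt (1 + lam ^ 2 * (x / ρm - p) ^ 2))
          = (lam ^ 2 / ρm) * ((x / ρm - p) / Real.sqrt (1 + lam ^ 2 * (x / ρm - p) ^ 2)) := by
        ring
      have e2 : lam ^ 2 * (y / ρm - p) / (ρm * Real.sqrt (1 + lam ^ 2 * (y / ρm - p) ^ 2))
          = (lam ^ 2 / ρm) * ((y / ρm - p) / Real.sqrt (1 + lam ^ 2 * (y / ρm - p) ^ 2)) := by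
        ring
      rw [e1, e2]
      exact mul_lt_mul_of_pos_left hkey (by positivity)
    exact mul_lt_mul_of_pos_left (by linarith) hα
  refine ⟨hpos0, hnegm, hanti.strictAntiOn _, ?_⟩
  -- continuity of g
  have hc : Continuous g := by
    apply continuous_const.mul
    apply continuous_const.sub
    apply Continuous.div
    · fun_prop
    · fun_prop
    · intro x
      have : 0 < Real.sqrt (1 + lam ^ 2 * (x / ρm - p) ^ 2) :=
        Real.sqrt_pos.mpr (by positivity)
      positivity
  -- existence via IVT
  have hmem : (0:ℝ) ∈ Ioo (g ρm) (g 0) := ⟨hnegm, hpos0⟩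
  obtain ⟨ρc, hρc, hgρc⟩ := intermediate_value_Ioo' hρm.le hc.continuousOn hmem
  refine ⟨ρc, ⟨hρc, hgρc⟩, ?_⟩
  rintro y ⟨hy, hgy⟩
  exact (hanti.strictAntiOn (Set.Icc 0 ρm)).injOn (Ioo_subset_Icc_self hy)
    (Ioo_subset_Icc_self hρc) (hgy.trans hgρc.symm)
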